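/- Let n ≥ 1, let A be a Hermitian n×n complex matrix, and let 0 < p < ∞. Then there exist a natural number K and Hermitian n×n complex matrices B_1, …, B_K such that |A ⊗ₖ 1 − 1 ⊗ₖ Aᵀ| = Σ_{k=1}^K |B_k ⊗ₖ 1 − 1 ⊗ₖ B_kᵀ|^p. (In finite dimensions, every 1-cost operator is a p-cost operator: C_1(H) ⊆ C_p(H).) -/

import Mathlib

open Kronecker Matrix
open scoped ComplexOrder

/-- `costOp p A` is the cost operator `|A ⊗ₖ 1 - 1 ⊗ₖ Aᵀ|^p`, where `|·|^p` is the
functional calculus applied with `x ↦ |x| ^ p` (real rpow). -/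
noncomputable def costOp {n : ℕ} (p : ℝ) (A : Matrix (Fin n) (Fin n) ℂ) :
    Matrix (Fin n × Fin n) (Fin n × Fin n) ℂ :=
  cfc (fun x : ℝ => |x| ^ p)
    (A ⊗ₖ (1 : Matrix (Fin n) (Fin n) ℂ) - (1 : Matrix (Fin n) (Fin n) ℂ) ⊗ₖ Aᵀ)

section Aux
variable {m : Type*} [Fintype m] [DecidableEq m]
/-- Conjugation by a unitary as an `ℝ`-algebra homomorphism on matrices. -/
noncomputable def unitaryConj (U : unitary (Matrix m m ℂ)) :
    Matrix m m ℂ →ₐ[ℝ] Matrix m m ℂ where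
  toFun x := (U : Matrix m m ℂ) * x * star (U : Matrix m m ℂ)
  map_one' := by simp only [mul_one]; exact (Unitary.mem_iff.mp U.2).2
  map_mul' x y := by
    have h : star (U : Matrix m m ℂ) * (U : Matrix m m ℂ) = 1 := (Unitary.mem_iff.mp U.2).1
    calc (U : Matrix m m ℂ) * (x * y) * star (U : Matrix m m ℂ)
        = (U : Matrix m m ℂ) * x * (star (U : Matrix m m ℂ) * (U : Matrix m m ℂ)) * y
            * star (U : Matrix m m ℂ) := by rw [h]; noncomm_ring
      _ = _ := by noncomm_ring
  map_zero' := by simp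
  map_add' x y := by noncomm_ring
  commutes' r := by
    have h2 : (U : Matrix m m ℂ) * star (U : Matrix m m ℂ) = 1 := (Unitary.mem_iff.mp U.2).2
    simp [Algebra.algebraMap_eq_smul_one, mul_smul_comm, smul_mul_assoc, h2]

lemma cfc_unitary_conj (U : unitary (Matrix m m ℂ)) (d : m → ℝ) (f : ℝ → ℝ) :
    cfc f ((U : Matrix m m ℂ) * diagonal (fun i => (d i : ℂ)) * star (U : Matrix m m ℂ)) =
      (U : Matrix m m ℂ) * diagonal (fun i => (f (d i) : ℂ)) * star (U : Matrix m m ℂ) := by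
  classical
  set D : Matrix m m ℂ := diagonal (fun i => (d i : ℂ)) with hDdef
  have hD : star D = D := by
    rw [hDdef, star_eq_conjTranspose, diagonal_conjTranspose]
    exact congrArg diagonal (funext fun i => Complex.conj_ofReal _)
  have hsa : _root_.IsSelfAdjoint ((U : Matrix m m ℂ) * D * star (U : Matrix m m ℂ)) := by
    show star _ = _
    rw [Matrix.star_mul, Matrix.star_mul, star_star, hD, mul_assoc]
  have hspec : spectrum ℝ ((U : Matrix m m ℂ) * D * star (U : Matrix m m ℂ)) ⊆ Set.range d := by
    intro x hx
    rw [← spectrum.algebraMap_mem_iff ℂ,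
      Unitary.spectrum_star_right_conjugate, hDdef, spectrum_diagonal] at hx
    obtain ⟨i, hi⟩ := hx
    exact ⟨i, Complex.ofReal_inj.mp (hi.trans (congrFun Complex.coe_algebraMap x))⟩
  set s : Finset ℝ := Finset.image d Finset.univ with hs
  set q : Polynomial ℝ := Lagrange.interpolate s id f with hq
  have hqf : ∀ x ∈ s, Polynomial.eval x q = f x := by
    intro x hx
    simpa [hq] using Lagrange.eval_interpolate_at_node f (Set.injOn_id _) hx
  have h1 : cfc f ((U : Matrix m m ℂ) * D * star (U : Matrix m m ℂ))
      = cfc q.eval ((U : Matrix m m ℂ) * D * star (U : Matrix m m ℂ)) := by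
    apply cfc_congr
    intro x hx
    obtain ⟨i, rfl⟩ := hspec hx
    exact (hqf _ (Finset.mem_image_of_mem d (Finset.mem_univ i))).symm
  rw [h1, cfc_polynomial q _ hsa]
  have h2 : (U : Matrix m m ℂ) * D * star (U : Matrix m m ℂ) = unitaryConj U D := rfl
  rw [h2, Polynomial.aeval_algHom_apply]
  have h5 : (Polynomial.aeval (fun i => ((d i : ℂ))) q : m → ℂ)
      = fun i => ((Polynomial.eval (d i) q : ℝ) : ℂ) := by
    funext i
    refine (Polynomial.aeval_algHom_apply (Pi.evalAlgHom ℝ (fun _ => ℂ) i)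
      (fun j => ((d j : ℂ))) q).symm.trans ?_
    show (Polynomial.aeval ((d i : ℂ)) q) = ((Polynomial.eval (d i) q : ℝ) : ℂ)
    rw [show ((d i : ℂ)) = algebraMap ℝ ℂ (d i) from
        (congrFun Complex.coe_algebraMap (d i)).symm,
      Polynomial.aeval_algebraMap_apply_eq_algebraMap_eval]
    exact congrFun Complex.coe_algebraMap _
  have h4 : (Polynomial.aeval D q : Matrix m m ℂ)
      = diagonal (fun i => ((Polynomial.eval (d i) q : ℝ) : ℂ)) := by
    have h3 : D = Matrix.diagonalAlgHom ℝ (fun i => (d i : ℂ)) := rfl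
    rw [h3, Polynomial.aeval_algHom_apply, h5]
    rfl
  rw [h4]
  have h6 : (fun i => ((Polynomial.eval (d i) q : ℝ) : ℂ)) = fun i => ((f (d i) : ℝ) : ℂ) := by
    funext i
    rw [hqf _ (Finset.mem_image_of_mem d (Finset.mem_univ i))]
  show unitaryConj U _ = _
  rw [h6]
  rfl


lemma conj_diag_isHermitian (U : unitary (Matrix m m ℂ)) (d : m → ℝ) :
    ((U : Matrix m m ℂ) * diagonal (fun i => (d i : ℂ))
      * star (U : Matrix m m ℂ)).IsHermitian := by
  have hD : star (diagonal (fun i => (d i : ℂ))) = diagonal (fun i => (d i : ℂ)) := by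
    rw [star_eq_conjTranspose, diagonal_conjTranspose]
    exact congrArg diagonal (funext fun i => Complex.conj_ofReal _)
  show _ᴴ = _
  rw [← star_eq_conjTranspose, Matrix.star_mul, Matrix.star_mul, star_star, hD, mul_assoc]

end Aux
section Kron
variable {n : ℕ}

lemma kron_conjTranspose (A B : Matrix (Fin n) (Fin n) ℂ) : (A ⊗ₖ B)ᴴ = Aᴴ ⊗ₖ Bᴴ := by
  ext ⟨i, j⟩ ⟨k, l⟩
  simp [conjTranspose_apply, mul_comm]

lemma star_star_transpose (P : Matrix (Fin n) (Fin n) ℂ) :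
    star ((star P)ᵀ) = Pᵀ := by
  ext i j
  simp [star_eq_conjTranspose, conjTranspose_apply, transpose_apply]

lemma kron_mem_unitary (U : unitary (Matrix (Fin n) (Fin n) ℂ)) :
    (U : Matrix (Fin n) (Fin n) ℂ) ⊗ₖ (star (U : Matrix (Fin n) (Fin n) ℂ))ᵀ
      ∈ unitary (Matrix (Fin n × Fin n) (Fin n × Fin n) ℂ) := by
  set P := (U : Matrix (Fin n) (Fin n) ℂ)
  have h1 : star P * P = 1 := (Unitary.mem_iff.mp U.2).1
  have h2 : P * star P = 1 := (Unitary.mem_iff.mp U.2).2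
  have hstar : star (P ⊗ₖ (star P)ᵀ) = star P ⊗ₖ Pᵀ := by
    rw [star_eq_conjTranspose, kron_conjTranspose, ← star_eq_conjTranspose,
      ← star_eq_conjTranspose, star_star_transpose]
  rw [Unitary.mem_iff, hstar]
  constructor
  · rw [← mul_kronecker_mul, h1, ← transpose_mul, h1, transpose_one, one_kronecker_one]
  · rw [← mul_kronecker_mul, h2, ← transpose_mul, h2, transpose_one, one_kronecker_one]

/-- The unitary `U ⊗ₖ conj U` on the doubled space. -/
noncomputable def kronUnit (U : unitary (Matrix (Fin n) (Fin n) ℂ)) :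
    unitary (Matrix (Fin n × Fin n) (Fin n × Fin n) ℂ) :=
  ⟨(U : Matrix (Fin n) (Fin n) ℂ) ⊗ₖ (star (U : Matrix (Fin n) (Fin n) ℂ))ᵀ,
    kron_mem_unitary U⟩

lemma kron_diff (U : unitary (Matrix (Fin n) (Fin n) ℂ)) (v : Fin n → ℝ) :
    ((U : Matrix (Fin n) (Fin n) ℂ) * diagonal (fun i => (v i : ℂ))
        * star (U : Matrix (Fin n) (Fin n) ℂ)) ⊗ₖ (1 : Matrix (Fin n) (Fin n) ℂ)
      - (1 : Matrix (Fin n) (Fin n) ℂ) ⊗ₖ ((U : Matrix (Fin n) (Fin n) ℂ)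
        * diagonal (fun i => (v i : ℂ)) * star (U : Matrix (Fin n) (Fin n) ℂ))ᵀ
      = (kronUnit U : Matrix (Fin n × Fin n) (Fin n × Fin n) ℂ)
        * diagonal (fun q : Fin n × Fin n => ((v q.1 - v q.2 : ℝ) : ℂ))
        * star (kronUnit U : Matrix (Fin n × Fin n) (Fin n × Fin n) ℂ) := by
  set P := (U : Matrix (Fin n) (Fin n) ℂ)
  set V := (star P)ᵀ with hV
  set D : Matrix (Fin n) (Fin n) ℂ := diagonal (fun i => (v i : ℂ)) with hD
  have h1 : star P * P = 1 := (Unitary.mem_iff.mp U.2).1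
  have h2 : P * star P = 1 := (Unitary.mem_iff.mp U.2).2
  have hsV : star V = Pᵀ := star_star_transpose P
  have hVsV : V * star V = 1 := by rw [hsV, hV, ← transpose_mul, h2, transpose_one]
  have hW : (kronUnit U : Matrix (Fin n × Fin n) (Fin n × Fin n) ℂ) = P ⊗ₖ V := rfl
  have hWs : star (kronUnit U : Matrix (Fin n × Fin n) (Fin n × Fin n) ℂ)
      = star P ⊗ₖ star V := by
    rw [hW, star_eq_conjTranspose, kron_conjTranspose, ← star_eq_conjTranspose,
      ← star_eq_conjTranspose]
  have hdiag : diagonal (fun q : Fin n × Fin n => ((v q.1 - v q.2 : ℝ) : ℂ))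
      = D ⊗ₖ (1 : Matrix (Fin n) (Fin n) ℂ) - (1 : Matrix (Fin n) (Fin n) ℂ) ⊗ₖ D := by
    rw [hD, ← diagonal_one, diagonal_kronecker_diagonal, diagonal_kronecker_diagonal,
      diagonal_sub]
    exact congrArg diagonal (funext fun q => by push_cast; ring)
  have hT : (P * D * star P)ᵀ = V * D * star V := by
    rw [transpose_mul, transpose_mul, diagonal_transpose, hsV, ← hV, mul_assoc]
  rw [hT, hWs, hW, hdiag, mul_sub, sub_mul, ← mul_kronecker_mul, ← mul_kronecker_mul,
    ← mul_kronecker_mul, ← mul_kronecker_mul]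
  simp only [mul_one, one_mul]
  rw [hVsV, h2]

end Kron

section Kron2
variable {n : ℕ}

lemma cfc_kron (U : unitary (Matrix (Fin n) (Fin n) ℂ)) (v : Fin n → ℝ) (f : ℝ → ℝ) :
    cfc f (((U : Matrix (Fin n) (Fin n) ℂ) * diagonal (fun i => (v i : ℂ))
        * star (U : Matrix (Fin n) (Fin n) ℂ)) ⊗ₖ (1 : Matrix (Fin n) (Fin n) ℂ)
      - (1 : Matrix (Fin n) (Fin n) ℂ) ⊗ₖ ((U : Matrix (Fin n) (Fin n) ℂ)
        * diagonal (fun i => (v i : ℂ)) * star (U : Matrix (Fin n) (Fin n) ℂ))ᵀ)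
    = (kronUnit U : Matrix (Fin n × Fin n) (Fin n × Fin n) ℂ)
      * diagonal (fun q : Fin n × Fin n => ((f (v q.1 - v q.2) : ℝ) : ℂ))
      * star (kronUnit U : Matrix (Fin n × Fin n) (Fin n × Fin n) ℂ) := by
  rw [kron_diff]
  exact cfc_unitary_conj (kronUnit U) (fun q : Fin n × Fin n => v q.1 - v q.2) f

end Kron2

section Mu
open Finset in
lemma exists_mu (n : ℕ) (hn : 1 ≤ n) (lam : Fin n → ℝ) (p : ℝ) (hp : 0 < p) :
    ∃ μ : Fin n → Fin n → ℝ, ∀ i j, |lam i - lam j| = ∑ k, |μ k i - μ k j| ^ p := by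
  classical
  set σ := Tuple.sort lam with hσ
  have hmono : Monotone (lam ∘ σ) := Tuple.monotone_sort lam
  have hn1 : n - 1 < n := Nat.sub_lt hn one_pos
  set F : ℕ → ℝ :=
    fun m => lam (σ ⟨min m (n-1), lt_of_le_of_lt (min_le_right _ _) hn1⟩) with hF
  have hFmono : Monotone F := by
    intro x y hxy
    exact hmono (by simp only [Fin.mk_le_mk]; exact min_le_min hxy le_rfl)
  set C : ℕ → ℝ := fun k => F (k+1) - F k with hC
  have hC0 : ∀ k, 0 ≤ C k := fun k => sub_nonneg.2 (hFmono (Nat.le_succ k))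
  set g : ℕ → ℕ → ℝ := fun k m => (C k) ^ (1/p) * (if k < m then 1 else 0) with hg
  have helper : ∀ a b : ℕ, a < n → b ≤ a →
      ∑ k ∈ range n, |g k a - g k b| ^ p = F a - F b := by
    intro a b ha hba
    have hterm : ∀ k ∈ range n, |g k a - g k b| ^ p = if k ∈ Ico b a then C k else 0 := by
      intro k _
      by_cases h2 : k < a
      · by_cases h1 : k < b
        · have e : g k a - g k b = 0 := by simp [hg, h1, h2]
          rw [e, abs_zero, Real.zero_rpow hp.ne', if_neg (by simp [Finset.mem_Ico]; omega)]
        · have e : g k a - g k b = C k ^ (1/p) := by simp [hg, h1, h2]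
          rw [e, abs_of_nonneg (Real.rpow_nonneg (hC0 k) _), ← Real.rpow_mul (hC0 k),
            one_div_mul_cancel hp.ne', Real.rpow_one,
            if_pos (Finset.mem_Ico.mpr ⟨not_lt.mp h1, h2⟩)]
      · have h1 : ¬ k < b := fun hkb => h2 (lt_of_lt_of_le hkb hba)
        have e : g k a - g k b = 0 := by simp [hg, h1, h2]
        rw [e, abs_zero, Real.zero_rpow hp.ne', if_neg (by simp [Finset.mem_Ico]; omega)]
    rw [Finset.sum_congr rfl hterm, Finset.sum_ite_mem,
      Finset.inter_eq_right.mpr (fun k hk => Finset.mem_range.mpr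
        (lt_of_lt_of_le (Finset.mem_Ico.mp hk).2 ha.le)),
      Finset.sum_Ico_eq_sub _ hba]
    simp only [hC]
    rw [Finset.sum_range_sub (f := F), Finset.sum_range_sub (f := F)]
    ring
  have hFval : ∀ jj : Fin n, F (jj : ℕ) = lam (σ jj) := by
    intro jj
    have hle : (jj : ℕ) ≤ n - 1 := Nat.le_sub_one_of_lt jj.isLt
    simp only [hF]
    exact congrArg lam (congrArg σ (Fin.ext (by simp [min_eq_left hle])))
  have hlam : ∀ i, lam i = F ((σ.symm i : Fin n) : ℕ) := by
    intro i
    rw [hFval (σ.symm i), Equiv.apply_symm_apply]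
  refine ⟨fun k i => g (k : ℕ) ((σ.symm i : Fin n) : ℕ), fun i j => ?_⟩
  rcases le_total ((σ.symm j : Fin n) : ℕ) ((σ.symm i : Fin n) : ℕ) with hba | hba
  · rw [hlam i, hlam j, abs_of_nonneg (sub_nonneg.2 (hFmono hba)),
      Fin.sum_univ_eq_sum_range
        (fun m => |g m ((σ.symm i : Fin n) : ℕ) - g m ((σ.symm j : Fin n) : ℕ)| ^ p) n,
      helper _ _ (σ.symm i).isLt hba]
  · rw [hlam i, hlam j, abs_sub_comm, abs_of_nonneg (sub_nonneg.2 (hFmono hba))]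
    simp only [abs_sub_comm (g _ ((σ.symm i : Fin n) : ℕ))]
    rw [Fin.sum_univ_eq_sum_range
        (fun m => |g m ((σ.symm j : Fin n) : ℕ) - g m ((σ.symm i : Fin n) : ℕ)| ^ p) n,
      helper _ _ (σ.symm j).isLt hba]
end Mu

lemma diagonal_sum' {ι κ : Type*} [Fintype ι] [DecidableEq κ] (w : ι → κ → ℂ) :
    ∑ i, Matrix.diagonal (w i) = Matrix.diagonal (fun q => ∑ i, w i q) := by
  ext a b
  rw [Matrix.sum_apply]
  by_cases h : a = b
  · subst h; simp [Matrix.diagonal_apply_eq]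
  · simp [Matrix.diagonal_apply_ne _ h]

/-- In finite dimensions, every 1-cost operator is a `p`-cost operator:
`C_1(H) ⊆ C_p(H)`. -/
theorem one_cost_subset_p_cost (n : ℕ) (hn : 1 ≤ n) (A : Matrix (Fin n) (Fin n) ℂ)
    (hA : A.IsHermitian) (p : ℝ) (hp : 0 < p) :
    ∃ (K : ℕ) (B : Fin K → Matrix (Fin n) (Fin n) ℂ),
      (∀ k, (B k).IsHermitian) ∧
      cfc (fun x : ℝ => |x|)
          (A ⊗ₖ (1 : Matrix (Fin n) (Fin n) ℂ) - (1 : Matrix (Fin n) (Fin n) ℂ) ⊗ₖ Aᵀ) =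
        ∑ k, costOp p (B k) := by
  classical
  obtain ⟨μ, hμ⟩ := exists_mu n hn hA.eigenvalues p hp
  set U : unitary (Matrix (Fin n) (Fin n) ℂ) := hA.eigenvectorUnitary with hU
  set W : Matrix (Fin n × Fin n) (Fin n × Fin n) ℂ := (↑(kronUnit U) : Matrix (Fin n × Fin n) (Fin n × Fin n) ℂ) with hW
  refine ⟨n, fun k => (U : Matrix (Fin n) (Fin n) ℂ) * diagonal (fun i => ((μ k i : ℝ) : ℂ))
      * star (U : Matrix (Fin n) (Fin n) ℂ), fun k => conj_diag_isHermitian U (μ k), ?_⟩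
  have hAeq : A = (U : Matrix (Fin n) (Fin n) ℂ)
      * diagonal (fun i => ((hA.eigenvalues i : ℝ) : ℂ)) * star (U : Matrix (Fin n) (Fin n) ℂ) :=
    hA.spectral_theorem
  have hRHS : ∀ k : Fin n, costOp p ((U : Matrix (Fin n) (Fin n) ℂ)
      * diagonal (fun i => ((μ k i : ℝ) : ℂ)) * star (U : Matrix (Fin n) (Fin n) ℂ))
      = W * diagonal (fun q : Fin n × Fin n => ((|μ k q.1 - μ k q.2| ^ p : ℝ) : ℂ)) * star W :=
    fun k => cfc_kron U (μ k) (fun x => |x| ^ p)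
  rw [hAeq, cfc_kron U hA.eigenvalues (fun x => |x|)]
  simp only [hRHS]
  rw [← Finset.sum_mul, ← Finset.mul_sum, diagonal_sum']
  congr 1
  congr 1
  exact congrArg diagonal (funext fun q => by rw [hμ q.1 q.2]; push_cast; rfl)
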